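/- (Quadratic diagonal large deviation bound) Let r ≥ 2 be even, 1 ≤ q ≤ √N, and let X₁,…,X_N be independent complex random variables with E X_i = 0 and E|X_i|^k ≤ 1/(N q^{k−2}) for 2 ≤ k ≤ 2r. Then for any deterministic a₁,…,a_N ∈ ℂ, ‖∑_i a_i (|X_i|² − E|X_i|²)‖_r ≤ 2 (1 + 2q²/N) (max_i |a_i|) · max(r/q², √(r/q²)). -/

import Mathlib

open MeasureTheory ProbabilityTheory

lemma aux_E_gt : (1:ℝ) < Real.exp 1 := by
  have := Real.add_one_le_exp (1:ℝ); linarith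

lemma aux_geom (m : ℕ) : ∑ s ∈ Finset.Icc 1 m, Real.exp 1 ^ s
    ≤ Real.exp 1 ^ (m + 1) / (Real.exp 1 - 1) := by
  have hE := aux_E_gt
  have h2 : (0:ℝ) < Real.exp 1 - 1 := by linarith
  induction m with
  | zero => simp; apply div_nonneg (by positivity) h2.le
  | succ m IH =>
    rw [Finset.sum_Icc_succ_top (by omega)]
    have key : Real.exp 1 ^ (m+1)/(Real.exp 1 - 1) + Real.exp 1 ^ (m+1)
        = Real.exp 1 ^ (m+1) * Real.exp 1 / (Real.exp 1 - 1) := by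
      field_simp; ring
    have h3 : Real.exp 1 ^ (m+1+1) = Real.exp 1 ^ (m+1) * Real.exp 1 := by ring
    rw [h3]; linarith

lemma aux_exp_pow (m : ℕ) (hm : 2 ≤ m) :
    Real.exp 1 ^ (m + 1) ≤ (Real.exp 1 - 1) * 4 ^ m := by
  have hE1 : Real.exp 1 < 2.7182818286 := Real.exp_one_lt_d9
  have hE2 := aux_E_gt
  induction m with
  | zero => omega
  | succ m IH =>
    rcases Nat.lt_or_ge m 2 with hm2 | hm2
    · interval_cases m
      · omega
      · have h3 : Real.exp 1 ^ (1+1+1) ≤ 2.7182818286^3 :=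
          pow_le_pow_left₀ (by positivity) hE1.le 3
        have h4 : (2.7182818286:ℝ)^3 < 20.1 := by norm_num
        have hE3 : (2.7182818283:ℝ) < Real.exp 1 := Real.exp_one_gt_d9
        have h5 : (Real.exp 1 - 1) * 4 ^ 2 = 16 * Real.exp 1 - 16 := by ring
        show Real.exp 1 ^ (1+1+1) ≤ (Real.exp 1 - 1) * 4 ^ 2
        rw [h5]
        norm_num at h3 h4 hE3 ⊢
        linarith
    · have := IH (by omega)
      calc Real.exp 1 ^ (m + 1 + 1) = Real.exp 1 * Real.exp 1 ^ (m+1) := by ring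
        _ ≤ 4 * ((Real.exp 1 - 1) * 4 ^ m) := by
            have hp : (0:ℝ) < Real.exp 1 ^ (m+1) := by positivity
            nlinarith
        _ = (Real.exp 1 - 1) * 4 ^ (m+1) := by ring

lemma aux_self_pow_le (s : ℕ) : (s:ℝ) ^ s / s.factorial ≤ Real.exp 1 ^ s := by
  have h1 : (s:ℝ) ^ s / s.factorial ≤ Real.exp s := by
    have h := Real.sum_le_exp_of_nonneg (x := (s:ℝ)) (Nat.cast_nonneg s) (s+1)
    refine le_trans ?_ h
    have heq : (s:ℝ)^s / s.factorial
        = ∑ i ∈ Finset.range (s+1), if i = s then (s:ℝ)^i / i.factorial else 0 := by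
      rw [Finset.sum_ite_eq' (Finset.range (s+1)) s]
      simp
    rw [heq]
    apply Finset.sum_le_sum
    intro i _
    split
    · simp
    · positivity
  calc (s:ℝ) ^ s / s.factorial ≤ Real.exp s := h1
    _ = Real.exp 1 ^ s := by rw [← Real.exp_one_rpow s, Real.rpow_natCast]

lemma aux_sum_bound (r : ℕ) (hr2 : 2 ≤ r) (hrE : Even r) (q : ℝ) (hq : 1 ≤ q) :
    ∑ s ∈ Finset.Icc 1 (r/2), (s:ℝ)^r / (s.factorial * q^(2*(r-s)))
      ≤ 2^(r/2) * (max ((r:ℝ)/q^2) (Real.sqrt ((r:ℝ)/q^2)))^r := by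
  have hq0 : (0:ℝ) < q := lt_of_lt_of_le one_pos hq
  have hq20 : (0:ℝ) < q^2 := by positivity
  set m := r/2 with hmdef
  have hrm : r = 2*m := by
    obtain ⟨k, hk⟩ := hrE
    omega
  have hm1 : 1 ≤ m := by omega
  set t : ℝ := (r:ℝ)/q^2 with htdef
  have ht0 : 0 < t := by positivity
  rcases le_or_gt (q^2) (r:ℝ) with hcase | hcase
  · -- q² ≤ r, so t ≥ 1, max = t
    have ht1 : 1 ≤ t := (one_le_div hq20).mpr hcase
    have hmax : max t (Real.sqrt t) = t := by
      rw [max_eq_left]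
      calc Real.sqrt t ≤ Real.sqrt (t^2) := Real.sqrt_le_sqrt (by nlinarith)
        _ = t := Real.sqrt_sq ht0.le
    rw [hmax]
    have hterm : ∀ s ∈ Finset.Icc 1 m, (s:ℝ)^r / (s.factorial * q^(2*(r-s)))
        ≤ ((m:ℝ)^r/q^(2*r)) * ((q^2)^s / s.factorial) := by
      intro s hs
      rw [Finset.mem_Icc] at hs
      have hsr : s ≤ r := by omega
      have hpow : q^(2*r) = q^(2*(r-s)) * (q^2)^s := by
        rw [← pow_mul, ← pow_add]
        congr 1
        omega
      have heq : ((m:ℝ)^r/q^(2*r)) * ((q^2)^s / s.factorial)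
          = (m:ℝ)^r / (s.factorial * q^(2*(r-s))) := by
        rw [hpow]
        have h1 : (0:ℝ) < q^(2*(r-s)) := by positivity
        have h2 : (0:ℝ) < (q^2)^s := by positivity
        have h3 : (0:ℝ) < (s.factorial:ℝ) := by positivity
        field_simp
      rw [heq]
      gcongr
      exact_mod_cast hs.2
    have hsum : ∑ s ∈ Finset.Icc 1 m, ((q^2)^s / (s.factorial:ℝ)) ≤ Real.exp 1 ^ r := by
      calc ∑ s ∈ Finset.Icc 1 m, ((q^2)^s / (s.factorial:ℝ))
          ≤ ∑ s ∈ Finset.range (m+1), ((q^2)^s / (s.factorial:ℝ)) := by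
            apply Finset.sum_le_sum_of_subset_of_nonneg
            · intro x hx
              rw [Finset.mem_Icc] at hx
              rw [Finset.mem_range]
              omega
            · intros; positivity
        _ ≤ Real.exp (q^2) := Real.sum_le_exp_of_nonneg hq20.le _
        _ ≤ Real.exp r := Real.exp_le_exp.mpr hcase
        _ = Real.exp 1 ^ r := by rw [← Real.exp_one_rpow r, Real.rpow_natCast]
    have hE1 : Real.exp 1 < 2.7182818286 := Real.exp_one_lt_d9
    have hE0 : (0:ℝ) < Real.exp 1 := Real.exp_pos 1
    have h8 : Real.exp 1 ^ r ≤ 8^m := by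
      rw [hrm, pow_mul]
      exact pow_le_pow_left₀ (by positivity) (by nlinarith) m
    have hkey : (m:ℝ)^r * Real.exp 1 ^ r ≤ (r:ℝ)^r * 2^m := by
      calc (m:ℝ)^r * Real.exp 1 ^ r ≤ (m:ℝ)^r * 8^m := by
            apply mul_le_mul_of_nonneg_left h8 (by positivity)
        _ = (r:ℝ)^r * 2^m := by
            have e8 : (8:ℝ)^m = 2^(3*m) := by
              rw [show (8:ℝ) = 2^3 by norm_num, ← pow_mul]
            rw [hrm, e8]
            push_cast
            ring
    have htr : t^r = (r:ℝ)^r / q^(2*r) := by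
      rw [htdef, div_pow, ← pow_mul]
    calc ∑ s ∈ Finset.Icc 1 m, (s:ℝ)^r / (s.factorial * q^(2*(r-s)))
        ≤ ∑ s ∈ Finset.Icc 1 m, ((m:ℝ)^r/q^(2*r)) * ((q^2)^s / s.factorial) :=
          Finset.sum_le_sum hterm
      _ = ((m:ℝ)^r/q^(2*r)) * ∑ s ∈ Finset.Icc 1 m, ((q^2)^s / s.factorial) := by
          rw [Finset.mul_sum]
      _ ≤ ((m:ℝ)^r/q^(2*r)) * Real.exp 1 ^ r := by
          apply mul_le_mul_of_nonneg_left hsum (by positivity)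
      _ = ((m:ℝ)^r * Real.exp 1 ^ r) / q^(2*r) := by ring
      _ ≤ ((r:ℝ)^r * 2^m) / q^(2*r) := by gcongr
      _ = 2^m * t^r := by rw [htr]; ring
  · -- r < q², t < 1, max = √t
    have ht1 : t < 1 := (div_lt_one hq20).mpr hcase
    have hmax : max t (Real.sqrt t) = Real.sqrt t := by
      rw [max_eq_right]
      calc t = Real.sqrt (t^2) := (Real.sqrt_sq ht0.le).symm
        _ ≤ Real.sqrt t := Real.sqrt_le_sqrt (by nlinarith)
    rw [hmax]
    have hsq : Real.sqrt t ^ r = t^m := by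
      rw [hrm, pow_mul, Real.sq_sqrt ht0.le]
    rw [hsq]
    rcases eq_or_lt_of_le hm1 with hm2 | hm2
    · -- m = 1, r = 2
      have hr2' : r = 2 := by omega
      subst hr2'
      have hmm : m = 1 := by omega
      rw [hmm] at *
      simp only [Finset.Icc_self, Finset.sum_singleton]
      norm_num
      have h' : t = 2/q^2 := by rw [htdef]; norm_num
      rw [h', show (2:ℝ)*(2/q^2) = 4/q^2 by ring, inv_eq_one_div]
      gcongr
      norm_num
    · -- 2 ≤ m
      have hm2' : 2 ≤ m := hm2
      have hterm : ∀ s ∈ Finset.Icc 1 m, (s:ℝ)^r / (s.factorial * q^(2*(r-s)))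
          ≤ Real.exp 1 ^ s * (t/2)^m := by
        intro s hs
        rw [Finset.mem_Icc] at hs
        have hsr : s ≤ r := by omega
        have e2 : (s:ℝ)^r = (s:ℝ)^s * (s:ℝ)^(r-s) := by
          rw [← pow_add]; congr 1; omega
        have heq : (s:ℝ)^r / (s.factorial * q^(2*(r-s)))
            = ((s:ℝ)^s/s.factorial) * (((s:ℝ)/q^2)^(r-s)) := by
          rw [e2, div_pow, ← pow_mul]
          have h1 : (0:ℝ) < q^(2*(r-s)) := by positivity
          have h3 : (0:ℝ) < (s.factorial:ℝ) := by positivity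
          field_simp
        rw [heq]
        have hs2 : (s:ℝ)/q^2 ≤ t/2 := by
          have hsm : (s:ℝ) ≤ (m:ℝ) := by exact_mod_cast hs.2
          have e3 : t/2 = (m:ℝ)/q^2 := by rw [htdef, hrm]; push_cast; ring
          rw [e3]
          gcongr
        have h1 : ((s:ℝ)/q^2)^(r-s) ≤ (t/2)^m := by
          have ht2 : t/2 ≤ 1 := by linarith
          calc ((s:ℝ)/q^2)^(r-s) ≤ (t/2)^(r-s) :=
                pow_le_pow_left₀ (by positivity) hs2 _
            _ ≤ (t/2)^m := by
                apply pow_le_pow_of_le_one (by positivity) ht2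
                omega
        calc ((s:ℝ)^s/s.factorial) * (((s:ℝ)/q^2)^(r-s))
            ≤ Real.exp 1 ^ s * (((s:ℝ)/q^2)^(r-s)) :=
              mul_le_mul_of_nonneg_right (aux_self_pow_le s) (by positivity)
          _ ≤ Real.exp 1 ^ s * (t/2)^m :=
              mul_le_mul_of_nonneg_left h1 (by positivity)
      calc ∑ s ∈ Finset.Icc 1 m, (s:ℝ)^r / (s.factorial * q^(2*(r-s)))
          ≤ ∑ s ∈ Finset.Icc 1 m, Real.exp 1 ^ s * (t/2)^m := Finset.sum_le_sum hterm
        _ = (∑ s ∈ Finset.Icc 1 m, Real.exp 1 ^ s) * (t/2)^m := by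
            rw [Finset.sum_mul]
        _ ≤ (Real.exp 1 ^ (m+1) / (Real.exp 1 - 1)) * (t/2)^m :=
            mul_le_mul_of_nonneg_right (aux_geom m) (by positivity)
        _ ≤ (4:ℝ)^m * (t/2)^m := by
            apply mul_le_mul_of_nonneg_right ?_ (by positivity)
            rw [div_le_iff₀ (by linarith [aux_E_gt])]
            rw [mul_comm]
            exact aux_exp_pow m hm2'
        _ = 2^m * t^m := by
            rw [div_pow, show (4:ℝ) = 2*2 by norm_num, mul_pow]
            field_simp

lemma aux_prod_integral {Ω ι : Type*} [MeasurableSpace Ω] {μ : Measure Ω}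
    [IsProbabilityMeasure μ] [DecidableEq ι] (W : ι → Ω → ℝ)
    (h : iIndepFun W μ) (hm : ∀ i, Measurable (W i))
    (s : Finset ι) (hint : ∀ i ∈ s, Integrable (W i) μ) :
    Integrable (fun ω => ∏ i ∈ s, W i ω) μ ∧
      ∫ ω, ∏ i ∈ s, W i ω ∂μ = ∏ i ∈ s, ∫ ω, W i ω ∂μ := by
  classical
  induction s using Finset.induction_on with
  | empty => simp
  | @insert i s hi IH =>
    have hint' : ∀ j ∈ s, Integrable (W j) μ := fun j hj => hint j (Finset.mem_insert_of_mem hj)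
    obtain ⟨IH1, IH2⟩ := IH hint'
    have hIndep : IndepFun (W i) (fun ω => ∏ j ∈ s, W j ω) μ := by
      have := h.indepFun_finsetProd_of_notMem hm hi
      have heq : (∏ j ∈ s, W j) = (fun ω => ∏ j ∈ s, W j ω) := by
        funext ω; simp [Finset.prod_apply]
      rw [heq] at this
      exact this.symm
    have hWi : Integrable (W i) μ := hint i (Finset.mem_insert_self i s)
    have hmul : Integrable (W i * fun ω => ∏ j ∈ s, W j ω) μ :=
      hIndep.integrable_mul hWi IH1
    constructor
    · refine hmul.congr ?_
      filter_upwards with ω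
      simp [Finset.prod_insert hi, Pi.mul_apply]
    · have := hIndep.integral_mul_eq_mul_integral hWi.aestronglyMeasurable IH1.aestronglyMeasurable
      calc ∫ ω, ∏ j ∈ insert i s, W j ω ∂μ
          = ∫ ω, (W i * fun ω => ∏ j ∈ s, W j ω) ω ∂μ := by
            congr 1; funext ω; simp [Finset.prod_insert hi]
        _ = (∫ ω, W i ω ∂μ) * ∫ ω, ∏ j ∈ s, W j ω ∂μ := this
        _ = ∏ j ∈ insert i s, ∫ ω, W j ω ∂μ := by rw [Finset.prod_insert hi, IH2]

lemma aux_count {N r : ℕ} (hN : 1 ≤ N) (hr1 : 1 ≤ r) (q c : ℝ) (hq : 0 < q) (hc : 0 ≤ c)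
    (G : (Fin r → Fin N) → ℝ)
    (hG : ∀ p, G p ≤ if ((Finset.image p Finset.univ).card ∈ Finset.Icc 1 (r/2)) then
        c / ((N:ℝ)^(Finset.image p Finset.univ).card
          * q^(2*(r-(Finset.image p Finset.univ).card))) else 0) :
    ∑ p : Fin r → Fin N, G p
      ≤ c * ∑ s ∈ Finset.Icc 1 (r/2), (s:ℝ)^r / (s.factorial * q^(2*(r-s))) := by
  classical
  set H : Finset (Fin N) → ℝ := fun T => if T.card ∈ Finset.Icc 1 (r/2) then
      c / ((N:ℝ)^T.card * q^(2*(r-T.card))) else 0 with hHdef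
  have hH0 : ∀ T, 0 ≤ H T := by
    intro T
    rw [hHdef]
    dsimp only
    split
    · positivity
    · exact le_rfl
  set im : (Fin r → Fin N) → Finset (Fin N) := fun p => Finset.image p Finset.univ with him
  have step1 : ∑ p : Fin r → Fin N, G p ≤ ∑ p : Fin r → Fin N, H (im p) :=
    Finset.sum_le_sum (fun p _ => hG p)
  have step2 : ∑ p : Fin r → Fin N, H (im p)
      = ∑ T ∈ Finset.univ.image im, (Finset.univ.filter (fun p => im p = T)).card • H T :=
    Finset.sum_comp H im
  have fiber : ∀ T : Finset (Fin N),
      ((Finset.univ.filter (fun p => im p = T)).card : ℝ) ≤ (T.card : ℝ)^r := by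
    intro T
    have hsub : Finset.univ.filter (fun p => im p = T)
        ⊆ Fintype.piFinset (fun _ : Fin r => T) := by
      intro p hp
      rw [Finset.mem_filter] at hp
      rw [Fintype.mem_piFinset]
      intro t
      rw [← hp.2]
      exact Finset.mem_image_of_mem p (Finset.mem_univ t)
    have := Finset.card_le_card hsub
    rw [Fintype.card_piFinset_const] at this
    exact_mod_cast this
  have step3 : ∑ T ∈ Finset.univ.image im, (Finset.univ.filter (fun p => im p = T)).card • H T
      ≤ ∑ T ∈ Finset.univ.image im, (T.card:ℝ)^r * H T := by
    apply Finset.sum_le_sum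
    intro T _
    rw [nsmul_eq_mul]
    exact mul_le_mul_of_nonneg_right (fiber T) (hH0 T)
  set B : Finset (Finset (Fin N)) :=
    (Finset.Icc 1 (r/2)).biUnion (fun s => Finset.powersetCard s Finset.univ) with hB
  have hmemB : ∀ T : Finset (Fin N), T.card ∈ Finset.Icc 1 (r/2) → T ∈ B := by
    intro T hT
    rw [hB, Finset.mem_biUnion]
    exact ⟨T.card, hT, Finset.mem_powersetCard_univ.mpr rfl⟩
  have step4 : ∑ T ∈ Finset.univ.image im, (T.card:ℝ)^r * H T
      ≤ ∑ T ∈ B, (T.card:ℝ)^r * H T := by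
    rw [show ∑ T ∈ Finset.univ.image im, (T.card:ℝ)^r * H T
        = ∑ T ∈ (Finset.univ.image im).filter (· ∈ B), (T.card:ℝ)^r * H T by
      apply (Finset.sum_subset (Finset.filter_subset _ _) ?_).symm
      intro T hT hTn
      rw [Finset.mem_filter, not_and] at hTn
      have hTB : T ∉ B := hTn hT
      have : H T = 0 := by
        rw [hHdef]
        dsimp only
        rw [if_neg]
        intro hcard
        exact hTB (hmemB T hcard)
      rw [this, mul_zero]]
    apply Finset.sum_le_sum_of_subset_of_nonneg
    · intro T hT
      exact (Finset.mem_filter.mp hT).2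
    · intro T _ _
      exact mul_nonneg (by positivity) (hH0 T)
  have step5 : ∑ T ∈ B, (T.card:ℝ)^r * H T
      = ∑ s ∈ Finset.Icc 1 (r/2), (N.choose s : ℝ) * ((s:ℝ)^r * (c / ((N:ℝ)^s * q^(2*(r-s))))) := by
    rw [hB, Finset.sum_biUnion]
    · apply Finset.sum_congr rfl
      intro s hs
      have : ∀ T ∈ Finset.powersetCard s (Finset.univ : Finset (Fin N)),
          (T.card:ℝ)^r * H T = (s:ℝ)^r * (c / ((N:ℝ)^s * q^(2*(r-s)))) := by
        intro T hT
        have hTc : T.card = s := Finset.mem_powersetCard_univ.mp hT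
        rw [hHdef]
        dsimp only
        rw [hTc, if_pos hs]
      rw [Finset.sum_congr rfl this, Finset.sum_const, Finset.card_powersetCard,
        Finset.card_univ, Fintype.card_fin, nsmul_eq_mul]
    · intro x hx y hy hxy
      exact Finset.disjoint_coe.mp (by
        simpa using Finset.disjoint_coe.mpr ((Finset.univ.pairwise_disjoint_powersetCard hxy)))
  have step6 : ∑ s ∈ Finset.Icc 1 (r/2), (N.choose s : ℝ) * ((s:ℝ)^r * (c / ((N:ℝ)^s * q^(2*(r-s)))))
      ≤ c * ∑ s ∈ Finset.Icc 1 (r/2), (s:ℝ)^r / (s.factorial * q^(2*(r-s))) := by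
    rw [Finset.mul_sum]
    apply Finset.sum_le_sum
    intro s hs
    have hchoose : (N.choose s : ℝ) ≤ (N:ℝ)^s / s.factorial := by
      have := Nat.choose_le_pow_div (α := ℝ) s N
      simpa using this
    have hN0 : (0:ℝ) < (N:ℝ)^s := by positivity
    have hq0 : (0:ℝ) < q^(2*(r-s)) := by positivity
    have hf0 : (0:ℝ) < (s.factorial : ℝ) := by positivity
    calc (N.choose s : ℝ) * ((s:ℝ)^r * (c / ((N:ℝ)^s * q^(2*(r-s)))))
        ≤ ((N:ℝ)^s / s.factorial) * ((s:ℝ)^r * (c / ((N:ℝ)^s * q^(2*(r-s))))) := by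
          apply mul_le_mul_of_nonneg_right hchoose (by positivity)
      _ = c * ((s:ℝ)^r / (s.factorial * q^(2*(r-s)))) := by
          field_simp
  calc ∑ p : Fin r → Fin N, G p ≤ ∑ p : Fin r → Fin N, H (im p) := step1
    _ = _ := step2
    _ ≤ _ := step3
    _ ≤ _ := step4
    _ = _ := step5
    _ ≤ _ := step6

lemma aux_real_moment {Ω : Type*} [MeasurableSpace Ω] {μ : Measure Ω} [IsProbabilityMeasure μ]
    {N r : ℕ} (hr2 : 2 ≤ r) (hN : 1 ≤ N)
    (q c A : ℝ) (hq : 1 ≤ q) (hc : 0 ≤ c) (hA : 0 ≤ A)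
    (Z : Fin N → Ω → ℝ) (hZm : ∀ i, Measurable (Z i))
    (hZindep : iIndepFun Z μ)
    (hZint : ∀ i, ∀ k, 1 ≤ k → k ≤ r → Integrable (fun ω => |Z i ω| ^ k) μ)
    (hZmean : ∀ i, ∫ ω, Z i ω ∂μ = 0)
    (hZmom : ∀ i, ∀ k, 2 ≤ k → k ≤ r → ∫ ω, |Z i ω| ^ k ∂μ ≤ c^k / (N * q^(2*k-2)))
    (b : Fin N → ℝ) (hb : ∀ i, |b i| ≤ A) :
    Integrable (fun ω => (∑ i, b i * Z i ω)^r) μ ∧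
    ∫ ω, (∑ i, b i * Z i ω)^r ∂μ
      ≤ A^r * c^r * ∑ s ∈ Finset.Icc 1 (r/2), (s:ℝ)^r / (s.factorial * q^(2*(r-s))) := by
  classical
  have hq0 : (0:ℝ) < q := lt_of_lt_of_le one_pos hq
  have hrN : Nonempty (Fin r) := ⟨⟨0, by omega⟩⟩
  -- integrability of powers of Z
  have hZpow : ∀ j k, 1 ≤ k → k ≤ r → Integrable (fun ω => Z j ω ^ k) μ := by
    intro j k h1 h2
    apply (hZint j k h1 h2).mono' ((hZm j).pow_const k).aestronglyMeasurable
    filter_upwards with ω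
    rw [Real.norm_eq_abs, abs_pow]
  set im : (Fin r → Fin N) → Finset (Fin N) := fun p => Finset.image p Finset.univ with him
  set mult : (Fin r → Fin N) → Fin N → ℕ :=
    fun p j => (Finset.univ.filter (fun t => p t = j)).card with hmult
  have hmult1 : ∀ p j, j ∈ im p → 1 ≤ mult p j := by
    intro p j hj
    rw [him] at hj
    obtain ⟨t, _, ht⟩ := Finset.mem_image.mp hj
    rw [hmult]
    dsimp only
    rw [Nat.succ_le_iff, Finset.card_pos]
    exact ⟨t, Finset.mem_filter.mpr ⟨Finset.mem_univ t, ht⟩⟩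
  have hmultr : ∀ p j, mult p j ≤ r := by
    intro p j
    calc mult p j ≤ Finset.univ.card := Finset.card_filter_le _ _
      _ = r := by rw [Finset.card_univ, Fintype.card_fin]
  have hsummult : ∀ p, ∑ j ∈ im p, mult p j = r := by
    intro p
    have := Finset.card_eq_sum_card_image p (Finset.univ : Finset (Fin r))
    rw [Finset.card_univ, Fintype.card_fin] at this
    exact this.symm
  -- per-tuple facts
  have hprod_eq : ∀ p (ω : Ω), ∏ t, Z (p t) ω = ∏ j ∈ im p, (Z j ω)^(mult p j) :=
    fun p ω => Finset.prod_comp (fun j => Z j ω) p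
  have hkey : ∀ p : Fin r → Fin N,
      Integrable (fun ω => ∏ t, Z (p t) ω) μ ∧
      ∫ ω, ∏ t, Z (p t) ω ∂μ = ∏ j ∈ im p, ∫ ω, Z j ω ^ mult p j ∂μ := by
    intro p
    set W : Fin N → Ω → ℝ := fun j ω => Z j ω ^ mult p j with hW
    have hWindep : iIndepFun W μ := by
      have := hZindep.comp (fun j (x:ℝ) => x ^ mult p j)
        (fun j => measurable_id.pow_const _)
      exact this
    have hWm : ∀ j, Measurable (W j) := fun j => (hZm j).pow_const _
    have hWint : ∀ j ∈ im p, Integrable (W j) μ := fun j hj =>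
      hZpow j (mult p j) (hmult1 p j hj) (hmultr p j)
    obtain ⟨h1, h2⟩ := aux_prod_integral W hWindep hWm (im p) hWint
    constructor
    · apply h1.congr
      filter_upwards with ω
      rw [hprod_eq p ω]
    · rw [show (fun ω => ∏ t, Z (p t) ω) = fun ω => ∏ j ∈ im p, W j ω from
        funext (fun ω => hprod_eq p ω)]
      exact h2
  -- the bound on |∫ ∏|
  have hIbd : ∀ p : Fin r → Fin N,
      |∫ ω, ∏ t, Z (p t) ω ∂μ| ≤ if ((im p).card ∈ Finset.Icc 1 (r/2)) then
        c^r / ((N:ℝ)^(im p).card * q^(2*(r-(im p).card))) else 0 := by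
    intro p
    rw [(hkey p).2]
    by_cases hgood : ∀ j ∈ im p, 2 ≤ mult p j
    · -- good case
      set s := (im p).card with hs
      have hs1 : 1 ≤ s := by
        rw [hs, him]
        have : (Finset.univ : Finset (Fin r)).Nonempty := Finset.univ_nonempty
        have h2 := this.image p
        rwa [← Finset.card_pos] at h2
      have hs2 : 2 * s ≤ r := by
        calc 2 * s = ∑ _j ∈ im p, 2 := by rw [Finset.sum_const, smul_eq_mul, hs]; ring
          _ ≤ ∑ j ∈ im p, mult p j := Finset.sum_le_sum hgood
          _ = r := hsummult p
      have hsIcc : s ∈ Finset.Icc 1 (r/2) := Finset.mem_Icc.mpr ⟨hs1, by omega⟩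
      rw [if_pos hsIcc]
      have habs : |∏ j ∈ im p, ∫ ω, Z j ω ^ mult p j ∂μ|
          = ∏ j ∈ im p, |∫ ω, Z j ω ^ mult p j ∂μ| := Finset.abs_prod _ _
      rw [habs]
      have hterm : ∀ j ∈ im p, |∫ ω, Z j ω ^ mult p j ∂μ|
          ≤ c^(mult p j) / (N * q^(2*(mult p j)-2)) := by
        intro j hj
        have h1 : |∫ ω, Z j ω ^ mult p j ∂μ| ≤ ∫ ω, |Z j ω ^ mult p j| ∂μ := by
          simpa [Real.norm_eq_abs] using
            norm_integral_le_integral_norm (μ := μ) (fun ω => Z j ω ^ mult p j)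
        have h2 : (fun ω => |Z j ω ^ mult p j|) = fun ω => |Z j ω| ^ mult p j := by
          funext ω; rw [abs_pow]
        rw [h2] at h1
        exact h1.trans (hZmom j (mult p j) (hgood j hj) (hmultr p j))
      calc ∏ j ∈ im p, |∫ ω, Z j ω ^ mult p j ∂μ|
          ≤ ∏ j ∈ im p, c^(mult p j) / (N * q^(2*(mult p j)-2)) :=
            Finset.prod_le_prod (fun j _ => abs_nonneg _) hterm
        _ = c^r / ((N:ℝ)^s * q^(2*(r-s))) := by
            rw [Finset.prod_div_distrib, Finset.prod_pow_eq_pow_sum, hsummult p]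
            congr 1
            rw [Finset.prod_mul_distrib, Finset.prod_const, hs]
            congr 1
            rw [Finset.prod_pow_eq_pow_sum]
            congr 1
            have h1 : ∀ j ∈ im p, (2*(mult p j) - 2) + 2 = 2 * mult p j := by
              intro j hj
              have := hgood j hj
              omega
            have h2 : ∑ j ∈ im p, ((2*(mult p j) - 2) + 2)
                = ∑ j ∈ im p, (2*(mult p j) - 2) + 2*s := by
              rw [Finset.sum_add_distrib, Finset.sum_const, hs, smul_eq_mul]
              ring
            have h3 : ∑ j ∈ im p, ((2*(mult p j) - 2) + 2) = 2*r := by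
              rw [Finset.sum_congr rfl h1, ← Finset.mul_sum, hsummult p]
            omega
    · -- bad case: some multiplicity is 1, integral vanishes
      push_neg at hgood
      obtain ⟨j, hj, hj2⟩ := hgood
      have hj1 : mult p j = 1 := by
        have := hmult1 p j hj
        omega
      have hzero : ∫ ω, Z j ω ^ mult p j ∂μ = 0 := by
        rw [hj1]
        simpa using hZmean j
      have : ∏ j' ∈ im p, ∫ ω, Z j' ω ^ mult p j' ∂μ = 0 :=
        Finset.prod_eq_zero hj hzero
      rw [this, abs_zero]
      split
      · positivity
      · exact le_rfl
  -- expansion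
  have hexp : ∀ ω : Ω, (∑ i, b i * Z i ω)^r
      = ∑ p : Fin r → Fin N, (∏ t, b (p t)) * ∏ t, Z (p t) ω := by
    intro ω
    rw [Finset.sum_pow' Finset.univ (fun i => b i * Z i ω) r, Fintype.piFinset_univ]
    apply Finset.sum_congr rfl
    intro p _
    rw [← Finset.prod_mul_distrib]
  have hterm_int : ∀ p : Fin r → Fin N,
      Integrable (fun ω => (∏ t, b (p t)) * ∏ t, Z (p t) ω) μ :=
    fun p => ((hkey p).1).const_mul _
  have hfun_eq : (fun ω => (∑ i, b i * Z i ω)^r)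
      = fun ω => ∑ p : Fin r → Fin N, (∏ t, b (p t)) * ∏ t, Z (p t) ω :=
    funext hexp
  constructor
  · rw [hfun_eq]
    exact integrable_finset_sum _ (fun p _ => hterm_int p)
  · rw [hfun_eq, integral_finset_sum _ (fun p _ => hterm_int p)]
    have hco : ∀ p : Fin r → Fin N, |∏ t, b (p t)| ≤ A^r := by
      intro p
      rw [Finset.abs_prod]
      calc ∏ t, |b (p t)| ≤ ∏ _t : Fin r, A :=
            Finset.prod_le_prod (fun t _ => abs_nonneg _) (fun t _ => hb (p t))
        _ = A^r := by rw [Finset.prod_const, Finset.card_univ, Fintype.card_fin]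
    have hGbd := aux_count hN (by omega) q (c^r) hq0 (by positivity)
      (fun p => |∫ ω, ∏ t, Z (p t) ω ∂μ|) hIbd
    calc ∑ p : Fin r → Fin N, ∫ ω, (∏ t, b (p t)) * ∏ t, Z (p t) ω ∂μ
        = ∑ p : Fin r → Fin N, (∏ t, b (p t)) * ∫ ω, ∏ t, Z (p t) ω ∂μ := by
          apply Finset.sum_congr rfl
          intro p _
          exact integral_const_mul _ _
      _ ≤ ∑ p : Fin r → Fin N, A^r * |∫ ω, ∏ t, Z (p t) ω ∂μ| := by
          apply Finset.sum_le_sum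
          intro p _
          calc (∏ t, b (p t)) * ∫ ω, ∏ t, Z (p t) ω ∂μ
              ≤ |(∏ t, b (p t)) * ∫ ω, ∏ t, Z (p t) ω ∂μ| := le_abs_self _
            _ = |∏ t, b (p t)| * |∫ ω, ∏ t, Z (p t) ω ∂μ| := abs_mul _ _
            _ ≤ A^r * |∫ ω, ∏ t, Z (p t) ω ∂μ| :=
                mul_le_mul_of_nonneg_right (hco p) (abs_nonneg _)
      _ = A^r * ∑ p : Fin r → Fin N, |∫ ω, ∏ t, Z (p t) ω ∂μ| := by
          rw [Finset.mul_sum]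
      _ ≤ A^r * (c^r * ∑ s ∈ Finset.Icc 1 (r/2), (s:ℝ)^r / (s.factorial * q^(2*(r-s)))) := by
          apply mul_le_mul_of_nonneg_left hGbd (by positivity)
      _ = A^r * c^r * ∑ s ∈ Finset.Icc 1 (r/2), (s:ℝ)^r / (s.factorial * q^(2*(r-s))) := by
          ring

lemma aux_moment_transfer {Ω : Type*} [MeasurableSpace Ω] (μ : Measure Ω)
    [IsProbabilityMeasure μ] {N r : ℕ} (hN : 1 ≤ N) (hr2 : 2 ≤ r)
    (q : ℝ) (hq : 1 ≤ q) (hqN : q^2 ≤ N)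
    (V : Ω → ℝ) (hVm : Measurable V) (hV0 : ∀ ω, 0 ≤ V ω)
    (hVint : ∀ k, 2 ≤ k → k ≤ 2*r → Integrable (fun ω => V ω ^ k) μ)
    (hVmom : ∀ k, 2 ≤ k → k ≤ 2*r → ∫ ω, V ω ^ k ∂μ ≤ 1 / (N * q^(k-2))) :
    (∀ k, 1 ≤ k → k ≤ r →
      Integrable (fun ω => |V ω^2 - ∫ ω', V ω'^2 ∂μ| ^ k) μ) ∧
    (∀ k, 2 ≤ k → k ≤ r →
      ∫ ω, |V ω^2 - ∫ ω', V ω'^2 ∂μ| ^ k ∂μ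
        ≤ (1 + 2*q^2/N)^k / (N * q^(2*k-2))) := by
  classical
  have hq0 : (0:ℝ) < q := lt_of_lt_of_le one_pos hq
  have hN0 : (0:ℝ) < N := by exact_mod_cast hN
  set m : ℝ := ∫ ω', V ω'^2 ∂μ with hmdef
  have hint2 : Integrable (fun ω => V ω ^ 2) μ := hVint 2 le_rfl (by omega)
  have hm0 : 0 ≤ m := by
    rw [hmdef]
    apply integral_nonneg
    intro ω
    positivity
  have hmN : m ≤ 1/N := by
    rw [hmdef]
    have := hVmom 2 le_rfl (by omega)
    simpa using this
  -- expansion of the dominating function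
  have hsplit : ∀ (k : ℕ) (ω : Ω), (V ω^2 + m)^k
      = ∑ j ∈ Finset.range (k+1), V ω^(2*j) * m^(k-j) * (k.choose j : ℝ) := by
    intro k ω
    rw [add_pow]
    apply Finset.sum_congr rfl
    intro j _
    rw [pow_mul]
  have hdom_int : ∀ k, k ≤ r → Integrable (fun ω => (V ω^2 + m)^k) μ := by
    intro k hk
    have : (fun ω => (V ω^2 + m)^k)
        = fun ω => ∑ j ∈ Finset.range (k+1), V ω^(2*j) * m^(k-j) * (k.choose j : ℝ) :=
      funext (hsplit k)
    rw [this]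
    apply integrable_finset_sum
    intro j hj
    rw [Finset.mem_range] at hj
    rcases Nat.eq_zero_or_pos j with hj0 | hj0
    · subst hj0
      apply (integrable_const (m^(k-0) * (k.choose 0 : ℝ))).congr
      filter_upwards with ω
      norm_num
    · have h2j : 2 ≤ 2*j := by omega
      have h2jr : 2*j ≤ 2*r := by omega
      exact ((hVint (2*j) h2j h2jr).mul_const _).mul_const _
  have habs_le : ∀ (k : ℕ) (ω : Ω), |V ω^2 - m| ^ k ≤ (V ω^2 + m)^k := by
    intro k ω
    apply pow_le_pow_left₀ (abs_nonneg _)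
    rw [abs_le]
    constructor
    · nlinarith [sq_nonneg (V ω), hm0]
    · nlinarith [sq_nonneg (V ω), hm0]
  have hZint : ∀ k, 1 ≤ k → k ≤ r →
      Integrable (fun ω => |V ω^2 - m| ^ k) μ := by
    intro k _ hk
    apply (hdom_int k hk).mono'
    · apply Measurable.aestronglyMeasurable
      exact (((hVm.pow_const 2).sub_const m).abs.pow_const k)
    · filter_upwards with ω
      rw [Real.norm_eq_abs, abs_pow, abs_abs]
      exact habs_le k ω
  refine ⟨hZint, ?_⟩
  intro k hk2 hkr
  -- moment values
  set E : ℕ → ℝ := fun j => ∫ ω, V ω ^ (2*j) ∂μ with hEdef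
  have hE0 : ∀ j, 0 ≤ E j := by
    intro j
    apply integral_nonneg
    intro ω
    have := hV0 ω
    positivity
  have hEzero : E 0 = 1 := by
    rw [hEdef]
    simp
  have hEbd : ∀ j, 1 ≤ j → j ≤ k → E j ≤ 1/(N * q^(2*j-2)) := by
    intro j h1 h2
    have := hVmom (2*j) (by omega) (by omega)
    exact this
  -- expanding the integral of the dominating function
  have hdom_val : ∫ ω, (V ω^2 + m)^k ∂μ
      = ∑ j ∈ Finset.range (k+1), E j * m^(k-j) * (k.choose j : ℝ) := by
    rw [show (fun ω => (V ω^2 + m)^k)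
        = fun ω => ∑ j ∈ Finset.range (k+1), V ω^(2*j) * m^(k-j) * (k.choose j : ℝ) from
      funext (hsplit k)]
    rw [integral_finset_sum]
    · apply Finset.sum_congr rfl
      intro j hj
      rw [integral_mul_const, integral_mul_const]
    · intro j hj
      rw [Finset.mem_range] at hj
      rcases Nat.eq_zero_or_pos j with hj0 | hj0
      · subst hj0
        apply (integrable_const (m^(k-0) * (k.choose 0 : ℝ))).congr
        filter_upwards with ω
        norm_num
      · exact ((hVint (2*j) (by omega) (by omega)).mul_const _).mul_const _
  set u : ℕ → ℝ := fun j => E j * m^(k-j) * (k.choose j : ℝ) with hudef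
  set D : ℝ := N * q^(2*k-2) with hDdef
  have hD0 : (0:ℝ) < D := by rw [hDdef]; positivity
  set v : ℕ → ℝ := fun j => ((2*q^2/N)^(k-j) * (k.choose j : ℝ)) / D with hvdef
  have hv_sum : (1 + 2*q^2/N)^k / D = ∑ j ∈ Finset.range (k+1), v j := by
    rw [add_pow, Finset.sum_div]
    apply Finset.sum_congr rfl
    intro j _
    rw [hvdef]
    dsimp only
    rw [one_pow, one_mul]
  have hterm2 : ∀ j, 2 ≤ j → j ≤ k → u j ≤ v j := by
    intro j hj2 hjk
    have h1 : E j ≤ 1/(N * q^(2*j-2)) := hEbd j (by omega) hjk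
    have h2 : m^(k-j) ≤ (1/(N:ℝ))^(k-j) := pow_le_pow_left₀ hm0 hmN _
    have hB0 : (0:ℝ) < 1/(N * q^(2*j-2)) := by positivity
    have hw : u j ≤ (1/(N * q^(2*j-2))) * (1/(N:ℝ))^(k-j) * (k.choose j : ℝ) := by
      rw [hudef]
      dsimp only
      apply mul_le_mul_of_nonneg_right _ (Nat.cast_nonneg _)
      apply mul_le_mul h1 h2 (by positivity) hB0.le
    refine hw.trans ?_
    have hqq : q^(2*k-2) = q^(2*j-2) * (q^2)^(k-j) := by
      rw [← pow_mul, ← pow_add]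
      congr 1
      omega
    have hveq : v j = 2^(k-j) * ((1/(N * q^(2*j-2))) * (1/(N:ℝ))^(k-j) * (k.choose j : ℝ)) := by
      rw [hvdef]
      dsimp only
      rw [hDdef, hqq, div_pow, mul_pow]
      field_simp
      have hNn : (N:ℝ)^(k-j) ≠ 0 := by positivity
      rw [one_div_pow, mul_comm ((N:ℝ)^(k-j)) (k.choose j : ℝ), mul_assoc,
        mul_one_div_cancel hNn, mul_one]
    rw [hveq]
    apply le_mul_of_one_le_left _ (one_le_pow₀ one_le_two)
    positivity
  have hlow : u 0 + u 1 ≤ v 0 + v 1 := by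
    have hu0 : u 0 ≤ (1/(N:ℝ))^k := by
      rw [hudef]
      dsimp only
      rw [hEzero, Nat.choose_zero_right, Nat.sub_zero]
      push_cast
      rw [one_mul, mul_one]
      exact pow_le_pow_left₀ hm0 hmN _
    have hu1 : u 1 ≤ (k:ℝ) * (1/(N:ℝ))^k := by
      rw [hudef]
      dsimp only
      rw [Nat.choose_one_right]
      have hE1 : E 1 ≤ 1/(N:ℝ) := by
        have := hEbd 1 le_rfl (by omega)
        simpa using this
      have h2 : m^(k-1) ≤ (1/(N:ℝ))^(k-1) := pow_le_pow_left₀ hm0 hmN _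
      have hpow : (1/(N:ℝ)) * (1/(N:ℝ))^(k-1) = (1/(N:ℝ))^k := by
        rw [← pow_succ']
        congr 1
        omega
      calc E 1 * m^(k-1) * (k:ℝ)
          ≤ (1/(N:ℝ)) * (1/(N:ℝ))^(k-1) * (k:ℝ) := by
            apply mul_le_mul_of_nonneg_right _ (Nat.cast_nonneg _)
            apply mul_le_mul hE1 h2 (by positivity) (by positivity)
        _ = (k:ℝ) * (1/(N:ℝ))^k := by rw [hpow]; ring
    have hv1 : v 1 = (k:ℝ) * 2^(k-1) * (1/(N:ℝ))^k := by
      rw [hvdef]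
      dsimp only
      rw [Nat.choose_one_right, hDdef]
      have hqq1 : q^(2*k-2) = (q^2)^(k-1) := by
        rw [← pow_mul]
        congr 1
        omega
      rw [hqq1, div_pow, mul_pow]
      have hNk : (N:ℝ)^k = (N:ℝ)*(N:ℝ)^(k-1) := by
        rw [← pow_succ']
        congr 1
        omega
      field_simp
      rw [← pow_succ, show k - 1 + 1 = k by omega, one_div_pow, mul_one_div_cancel (by positivity)]
    have hv0 : 0 ≤ v 0 := by
      rw [hvdef]
      dsimp only
      positivity
    have hkk : (k:ℝ) + 1 ≤ (k:ℝ) * 2^(k-1) := by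
      have h2 : (2:ℕ) ≤ 2^(k-1) := by
        calc (2:ℕ) = 2^1 := rfl
          _ ≤ 2^(k-1) := Nat.pow_le_pow_right (by norm_num) (by omega)
      have : k + 1 ≤ k * 2^(k-1) := by nlinarith
      exact_mod_cast this
    have hNk : (0:ℝ) ≤ (1/(N:ℝ))^k := by positivity
    rw [hv1]
    nlinarith
  have hsum_uv : ∑ j ∈ Finset.range (k+1), u j ≤ ∑ j ∈ Finset.range (k+1), v j := by
    have hsplit' : Finset.range (k+1) = insert 0 (insert 1 (Finset.Ico 2 (k+1))) := by
      ext x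
      simp only [Finset.mem_range, Finset.mem_insert, Finset.mem_Ico]
      omega
    have h0 : (0:ℕ) ∉ insert 1 (Finset.Ico 2 (k+1)) := by simp
    have h1 : (1:ℕ) ∉ Finset.Ico 2 (k+1) := by simp
    rw [hsplit', Finset.sum_insert h0, Finset.sum_insert h1,
      Finset.sum_insert h0, Finset.sum_insert h1]
    have hIco : ∑ j ∈ Finset.Ico 2 (k+1), u j ≤ ∑ j ∈ Finset.Ico 2 (k+1), v j := by
      apply Finset.sum_le_sum
      intro j hj
      rw [Finset.mem_Ico] at hj
      exact hterm2 j hj.1 (by omega)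
    linarith
  calc ∫ ω, |V ω^2 - m| ^ k ∂μ
      ≤ ∫ ω, (V ω^2 + m)^k ∂μ :=
        integral_mono (hZint k (by omega) hkr) (hdom_int k hkr) (fun ω => habs_le k ω)
    _ = ∑ j ∈ Finset.range (k+1), u j := hdom_val
    _ ≤ ∑ j ∈ Finset.range (k+1), v j := hsum_uv
    _ = (1 + 2*q^2/N)^k / (N * q^(2*k-2)) := hv_sum.symm

/-- Quadratic diagonal large deviation bound: for independent centered `X_i` with
`E|X_i|^k ≤ 1/(N q^{k−2})` for `2 ≤ k ≤ 2r` (`r ≥ 2` even, `1 ≤ q ≤ √N`) and deterministic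
`a_i`, `‖∑ a_i (|X_i|² − E|X_i|²)‖_r ≤ 2 (1 + 2q²/N) (max |a_i|) max(r/q², √(r/q²))`. -/
theorem stmt_12 {Ω : Type*} [MeasurableSpace Ω] (μ : Measure Ω) [IsProbabilityMeasure μ]
    {N : ℕ} (r : ℕ) (hr : Even r) (hr2 : 2 ≤ r)
    (q : ℝ) (hq1 : 1 ≤ q) (hqN : q ≤ Real.sqrt N)
    (X : Fin N → Ω → ℂ) (hmeas : ∀ i, Measurable (X i))
    (hindep : iIndepFun X μ)
    (hint : ∀ i, Integrable (X i) μ)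
    (hmean : ∀ i, ∫ ω, X i ω ∂μ = 0)
    (hintk : ∀ i, ∀ k, 2 ≤ k → k ≤ 2 * r → Integrable (fun ω => ‖X i ω‖ ^ k) μ)
    (hmom : ∀ i, ∀ k, 2 ≤ k → k ≤ 2 * r →
      ∫ ω, ‖X i ω‖ ^ k ∂μ ≤ 1 / (N * q ^ (k - 2)))
    (a : Fin N → ℂ) :
    (∫ ω, ‖∑ i, a i *
          ((‖X i ω‖ ^ 2 - ∫ ω', ‖X i ω'‖ ^ 2 ∂μ : ℝ) : ℂ)‖ ^ r ∂μ)
        ^ ((1 : ℝ) / r)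
      ≤ 2 * (1 + 2 * q ^ 2 / N) * (⨆ i, ‖a i‖) *
          max (r / q ^ 2) (Real.sqrt (r / q ^ 2)) := by
  classical
  have hq0 : (0:ℝ) < q := lt_of_lt_of_le one_pos hq1
  have hN : 1 ≤ N := by
    by_contra h
    have hN0 : N = 0 := by omega
    rw [hN0] at hqN
    simp at hqN
    linarith
  have hNpos : (0:ℝ) < N := by exact_mod_cast hN
  have hqN2 : q^2 ≤ (N:ℝ) := by
    have h := pow_le_pow_left₀ (by linarith : (0:ℝ) ≤ q) hqN 2
    rwa [Real.sq_sqrt (Nat.cast_nonneg N)] at h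
  have hNe : Nonempty (Fin N) := ⟨⟨0, by omega⟩⟩
  set c : ℝ := 1 + 2*q^2/(N:ℝ) with hcdef
  have hc0 : (0:ℝ) ≤ c := by positivity
  set A : ℝ := ⨆ i, ‖a i‖ with hAdef
  set M : ℝ := max ((r:ℝ)/q^2) (Real.sqrt ((r:ℝ)/q^2)) with hMdef
  have hM0 : 0 ≤ M := le_trans (Real.sqrt_nonneg _) (le_max_right _ _)
  set Z : Fin N → Ω → ℝ := fun i ω => ‖X i ω‖^2
    - ∫ ω', ‖X i ω'‖^2 ∂μ with hZdef
  -- transfer of moment bounds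
  have htrans : ∀ i, (∀ k, 1 ≤ k → k ≤ r → Integrable (fun ω => |Z i ω|^k) μ) ∧
      (∀ k, 2 ≤ k → k ≤ r → ∫ ω, |Z i ω|^k ∂μ ≤ c^k / (N * q^(2*k-2))) := by
    intro i
    exact aux_moment_transfer μ hN hr2 q hq1 hqN2 (fun ω => ‖X i ω‖)
      (continuous_norm.measurable.comp (hmeas i)) (fun ω => norm_nonneg _)
      (hintk i) (hmom i)
  have hZmeas : ∀ i, Measurable (Z i) :=
    fun i => ((continuous_norm.measurable.comp (hmeas i)).pow_const 2).sub_const _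
  have hZindep : iIndepFun Z μ := by
    exact hindep.comp (fun i (x:ℂ) => ‖x‖^2 - ∫ ω', ‖X i ω'‖^2 ∂μ)
      (fun i => ((continuous_norm.measurable.pow_const 2)).sub_const _)
  have hZmean : ∀ i, ∫ ω, Z i ω ∂μ = 0 := by
    intro i
    rw [hZdef]
    dsimp only
    rw [integral_sub (hintk i 2 le_rfl (by omega)) (integrable_const _), integral_const]
    simp
  have hAle : ∀ i, ‖a i‖ ≤ A :=
    fun i => le_ciSup (f := fun i => ‖a i‖) (Set.Finite.bddAbove (Set.finite_range _)) i
  have hA0 : 0 ≤ A := le_trans (norm_nonneg _) (hAle (Classical.arbitrary _))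
  -- real/imaginary part moment bounds
  have hre := aux_real_moment hr2 hN q c A hq1 hc0 hA0 Z hZmeas hZindep
    (fun i => (htrans i).1) hZmean (fun i => (htrans i).2)
    (fun i => (a i).re) (fun i => le_trans (Complex.abs_re_le_norm _) (hAle i))
  have him := aux_real_moment hr2 hN q c A hq1 hc0 hA0 Z hZmeas hZindep
    (fun i => (htrans i).1) hZmean (fun i => (htrans i).2)
    (fun i => (a i).im) (fun i => le_trans (Complex.abs_im_le_norm _) (hAle i))
  set S : ℝ := ∑ s ∈ Finset.Icc 1 (r/2), (s:ℝ)^r / (s.factorial * q^(2*(r-s))) with hSdef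
  have hSbd : S ≤ 2^(r/2) * M^r := aux_sum_bound r hr2 hr q hq1
  set m2 := r/2 with hm2def
  have hrm2 : r = 2*m2 := by
    obtain ⟨k, hk⟩ := hr
    omega
  have hm21 : 1 ≤ m2 := by omega
  -- pointwise bound
  have hpoint : ∀ ω, ‖∑ i, a i * ((Z i ω : ℝ):ℂ)‖^r
      ≤ 2^(m2-1) * ((∑ i, (a i).re * Z i ω)^r + (∑ i, (a i).im * Z i ω)^r) := by
    intro ω
    set w : ℂ := ∑ i, a i * ((Z i ω : ℝ):ℂ) with hw
    have hw_re : w.re = ∑ i, (a i).re * Z i ω := by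
      rw [hw, Complex.re_sum]
      apply Finset.sum_congr rfl
      intro i _
      simp [Complex.mul_re]
    have hw_im : w.im = ∑ i, (a i).im * Z i ω := by
      rw [hw, Complex.im_sum]
      apply Finset.sum_congr rfl
      intro i _
      simp [Complex.mul_im]
    calc ‖w‖ ^ r = (w.re^2 + w.im^2)^m2 := by
          rw [hrm2, pow_mul, Complex.sq_norm, Complex.normSq_apply]
          congr 1
          ring
      _ ≤ 2^(m2-1) * ((w.re^2)^m2 + (w.im^2)^m2) :=
          add_pow_le (sq_nonneg _) (sq_nonneg _) m2
      _ = 2^(m2-1) * ((∑ i, (a i).re * Z i ω)^r + (∑ i, (a i).im * Z i ω)^r) := by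
          rw [← pow_mul, ← pow_mul, ← hrm2, hw_re, hw_im]
  -- integral bound
  have hint_g : Integrable (fun ω => 2^(m2-1) *
      ((∑ i, (a i).re * Z i ω)^r + (∑ i, (a i).im * Z i ω)^r)) μ :=
    (hre.1.add him.1).const_mul _
  have hmono : ∫ ω, ‖∑ i, a i * ((Z i ω : ℝ):ℂ)‖^r ∂μ
      ≤ ∫ ω, 2^(m2-1) * ((∑ i, (a i).re * Z i ω)^r + (∑ i, (a i).im * Z i ω)^r) ∂μ := by
    apply integral_mono_of_nonneg
    · filter_upwards with ω
      positivity
    · exact hint_g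
    · filter_upwards with ω
      exact hpoint ω
  have hIg : ∫ ω, 2^(m2-1) * ((∑ i, (a i).re * Z i ω)^r + (∑ i, (a i).im * Z i ω)^r) ∂μ
      = 2^(m2-1) * ((∫ ω, (∑ i, (a i).re * Z i ω)^r ∂μ)
        + ∫ ω, (∑ i, (a i).im * Z i ω)^r ∂μ) := by
    rw [integral_const_mul, integral_add hre.1 him.1]
  have hfinal : ∫ ω, ‖∑ i, a i * ((Z i ω : ℝ):ℂ)‖^r ∂μ ≤ (2*c*A*M)^r := by
    have h2m : (2:ℝ)^(m2-1) * 2 = 2^m2 := by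
      rw [← pow_succ]
      congr 1
      omega
    calc ∫ ω, ‖∑ i, a i * ((Z i ω : ℝ):ℂ)‖^r ∂μ
        ≤ 2^(m2-1) * ((∫ ω, (∑ i, (a i).re * Z i ω)^r ∂μ)
          + ∫ ω, (∑ i, (a i).im * Z i ω)^r ∂μ) := by rw [← hIg]; exact hmono
      _ ≤ 2^(m2-1) * (A^r * c^r * S + A^r * c^r * S) := by
          apply mul_le_mul_of_nonneg_left (add_le_add hre.2 him.2) (by positivity)
      _ = 2^m2 * (A^r * c^r * S) := by rw [← h2m]; ring
      _ ≤ 2^m2 * (A^r * c^r * (2^m2 * M^r)) := by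
          apply mul_le_mul_of_nonneg_left _ (by positivity)
          apply mul_le_mul_of_nonneg_left hSbd (by positivity)
      _ = (2*c*A*M)^r := by
          rw [show ((2:ℝ)*c*A*M)^r = 2^r*c^r*A^r*M^r by rw [mul_pow, mul_pow, mul_pow]]
          rw [show (2:ℝ)^r = 2^m2 * 2^m2 by rw [← pow_add]; congr 1; omega]
          ring
  -- conclude via rpow
  have hR0 : (0:ℝ) ≤ 2*c*A*M := by positivity
  have hint_nonneg : (0:ℝ) ≤ ∫ ω, ‖∑ i, a i * ((Z i ω : ℝ):ℂ)‖^r ∂μ :=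
    integral_nonneg (fun ω => by positivity)
  have hr0 : (r:ℝ) ≠ 0 := by positivity
  have hrpow : (∫ ω, ‖∑ i, a i * ((Z i ω : ℝ):ℂ)‖^r ∂μ) ^ ((1:ℝ)/r)
      ≤ 2*c*A*M := by
    have h1 := Real.rpow_le_rpow hint_nonneg hfinal (by positivity : (0:ℝ) ≤ (1:ℝ)/r)
    have h2 : ((2*c*A*M)^r : ℝ) ^ ((1:ℝ)/r) = 2*c*A*M := by
      rw [← Real.rpow_natCast (2*c*A*M) r, ← Real.rpow_mul hR0]
      rw [mul_one_div, div_self hr0, Real.rpow_one]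
    rw [h2] at h1
    exact h1
  exact hrpow
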